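/- Let 0 ≤ k ≤ n be integers. The Schubert cochain complex over ℤ is isomorphic, as a cochain complex of abelian groups, to the direct sum over all S ∈ {n;k} with Out(S) = ∅ of the card(In(S))-fold tensor power D^{⊗card(In(S))}, shifted so that this tensor power occupies cohomological degrees d(S) − card(In(S)) through d(S). -/

import Mathlib

open scoped BigOperators Classical

/-- `{n;k}`: the set of subsets of `{1,…,n}` of cardinality `k`. -/
def Sset (n k : ℕ) : Finset (Finset ℕ) := (Finset.Icc 1 n).powersetCard k

/-- `elt S r` is `s_r`, the `r`-th smallest element of `S` (1-indexed); junk value `0` out of range. -/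
def elt (S : Finset ℕ) (r : ℕ) : ℕ := (S.sort (· ≤ ·)).getD (r - 1) 0

/-- `s_{r+1}`, with the convention `s_{k+1} = n+1`. -/
def nxt (n : ℕ) (S : Finset ℕ) (r : ℕ) : ℕ := if r = S.card then n + 1 else elt S (r + 1)

/-- `s_{r-1}`, with the convention `s_0 = 0`. -/
def prv (S : Finset ℕ) (r : ℕ) : ℕ := if r = 1 then 0 else elt S (r - 1)

/-- `d_r(S) = Σ_{r ≤ i ≤ k} (s_i − i)`. -/
def dr (S : Finset ℕ) (r : ℕ) : ℕ := ∑ i ∈ Finset.Icc r S.card, (elt S i - i)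

/-- `d(S) = d_1(S)`. -/
def dS (S : Finset ℕ) : ℕ := dr S 1

/-- `S_r`: the set obtained from `S` by replacing `s_r` with `s_r + 1`. -/
def Sr (S : Finset ℕ) (r : ℕ) : Finset ℕ := insert (elt S r + 1) (S.erase (elt S r))

/-- `In(S) = {i ∈ {1,…,k} : s_i ≡ k (mod 2) and s_{i−1} < s_i − 1}` (convention `s_0 = 0`). -/
def InS (k : ℕ) (S : Finset ℕ) : Finset ℕ :=
  (Finset.Icc 1 k).filter fun i => elt S i % 2 = k % 2 ∧ prv S i + 1 < elt S i

/-- `Out(S) = {i ∈ {1,…,k} : s_i ≢ k (mod 2) and s_i + 1 < s_{i+1}}` (convention `s_{k+1} = n+1`). -/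
def OutS (n k : ℕ) (S : Finset ℕ) : Finset ℕ :=
  (Finset.Icc 1 k).filter fun i => ¬ (elt S i % 2 = k % 2) ∧ elt S i + 1 < nxt n S i

/-- The coefficient of `T` in the Schubert differential `δ(S)`. -/
noncomputable def schubCoeff (n k : ℕ) (R : Type*) [CommRing R] (T S : Finset ℕ) : R :=
  ∑ r ∈ Finset.Icc 1 k,
    if 1 < nxt n S r - elt S r ∧ Odd ((k : ℤ) - elt S r) ∧ T = Sr S r
    then (-1 : R) ^ dr S r * 2 else 0

/-- The matrix of the Schubert differential on the basis `{n;k}`. -/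
noncomputable def schubD (n k : ℕ) (R : Type*) [CommRing R] :
    Matrix ↥(Sset n k) ↥(Sset n k) R :=
  fun T S => schubCoeff n k R T.1 S.1

/-- An isomorphism of (co)chain complexes, where a complex is presented by a finite basis `ι`,
a degree function `deg : ι → ℤ`, and the matrix `D` of its differential: an `R`-linear
equivalence commuting with the differentials and preserving the grading. -/
def CxIso {ι κ : Type*} [Fintype ι] [Fintype κ] (R : Type*) [CommRing R]
    (D₁ : Matrix ι ι R) (deg₁ : ι → ℤ) (D₂ : Matrix κ κ R) (deg₂ : κ → ℤ) : Prop :=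
  ∃ e : (ι → R) ≃ₗ[R] (κ → R),
    (∀ v, e (D₁.mulVec v) = D₂.mulVec (e v)) ∧
    (∀ (m : ℤ) (v : ι → R), (∀ i, deg₁ i ≠ m → v i = 0) → ∀ j, deg₂ j ≠ m → e v j = 0) ∧
    (∀ (m : ℤ) (w : κ → R), (∀ j, deg₂ j ≠ m → w j = 0) → ∀ i, deg₁ i ≠ m → e.symm w i = 0)

/-- The index set of `⊕_{S : Out(S) = ∅} D^{⊗ In(S)}`: pairs `(S, B)` with `S ∈ {n;k}`,
`Out(S) = ∅` and `B ⊆ In(S)` (recording the tensor factors currently in degree `1`). -/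
noncomputable def cubesIdx (n k : ℕ) : Finset (Finset ℕ × Finset ℕ) :=
  (((Sset n k).filter fun S => OutS n k S = ∅) ×ˢ (Finset.Icc 1 k).powerset).filter
    fun p => p.2 ⊆ InS k p.1

/-- The coefficient of `B'` in the differential of the basis vector `B` of the tensor power
`D^{⊗U}` of the two-term cochain complex `D = (ℤ →2→ ℤ)`, with factors indexed by the finite
set `U` in increasing order and the usual Koszul signs. -/
def cubeUp (U B' B : Finset ℕ) : ℤ :=
  ∑ i ∈ U, if i ∉ B ∧ B' = insert i B then (-1 : ℤ) ^ (B.filter (· < i)).card * 2 else 0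

/-- The differential of `⊕_{S : Out(S) = ∅} D^{⊗ In(S)}[d(S) − card In(S)]`. -/
noncomputable def cubesD (n k : ℕ) : Matrix ↥(cubesIdx n k) ↥(cubesIdx n k) ℤ :=
  fun p q => if p.1.1 = q.1.1 then cubeUp (InS k q.1.1) p.1.2 q.1.2 else 0


/-! ## Auxiliary development -/

-- list for a function on [1..k]
def mkL (k : ℕ) (f : ℕ → ℕ) : List ℕ := (List.range' 1 k).map f
noncomputable def mkS (k : ℕ) (f : ℕ → ℕ) : Finset ℕ := (mkL k f).toFinset

lemma mem_mkS {k : ℕ} {f : ℕ → ℕ} {x : ℕ} :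
    x ∈ mkS k f ↔ ∃ i, 1 ≤ i ∧ i ≤ k ∧ f i = x := by
  simp only [mkS, mkL, List.mem_toFinset, List.mem_map, List.mem_range'_1]
  constructor
  · rintro ⟨i, hi, rfl⟩; exact ⟨i, by omega, by omega, rfl⟩
  · rintro ⟨i, h1, h2, rfl⟩; exact ⟨i, by omega, rfl⟩

lemma mkL_sorted {k : ℕ} {f : ℕ → ℕ}
    (hf : ∀ i j, 1 ≤ i → i < j → j ≤ k → f i < f j) :
    (mkL k f).Pairwise (· < ·) := by
  rw [List.pairwise_iff_getElem]
  intro i j hi hj hij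
  simp only [mkL, List.length_map, List.length_range'] at hi hj
  simp only [mkL, List.getElem_map, List.getElem_range']
  exact hf _ _ (by omega) (by omega) (by omega)

lemma mkS_sort {k : ℕ} {f : ℕ → ℕ}
    (hf : ∀ i j, 1 ≤ i → i < j → j ≤ k → f i < f j) :
    (mkS k f).sort (· ≤ ·) = mkL k f := by
  have hs := mkL_sorted hf
  exact (List.toFinset_sort (· ≤ ·) hs.nodup).mpr (hs.imp le_of_lt)

lemma mkS_elt {k : ℕ} {f : ℕ → ℕ}
    (hf : ∀ i j, 1 ≤ i → i < j → j ≤ k → f i < f j)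
    {r : ℕ} (h1 : 1 ≤ r) (h2 : r ≤ k) : elt (mkS k f) r = f r := by
  rw [elt, mkS_sort hf]
  have hl : r - 1 < (mkL k f).length := by
    simp [mkL]; omega
  rw [List.getD_eq_getElem _ _ hl]
  simp only [mkL, List.getElem_map, List.getElem_range']
  congr 1; omega

lemma mkS_card {k : ℕ} {f : ℕ → ℕ}
    (hf : ∀ i j, 1 ≤ i → i < j → j ≤ k → f i < f j) :
    (mkS k f).card = k := by
  have := (mkL_sorted hf).nodup
  rw [mkS, List.card_toFinset, this.dedup]
  simp [mkL]

lemma mem_Sset {n k : ℕ} {S : Finset ℕ} :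
    S ∈ Sset n k ↔ S ⊆ Finset.Icc 1 n ∧ S.card = k := Finset.mem_powersetCard

lemma mkS_mem_Sset {n k : ℕ} {f : ℕ → ℕ}
    (hf : ∀ i j, 1 ≤ i → i < j → j ≤ k → f i < f j)
    (h1 : ∀ i, 1 ≤ i → i ≤ k → 1 ≤ f i) (h2 : ∀ i, 1 ≤ i → i ≤ k → f i ≤ n) :
    mkS k f ∈ Sset n k := by
  rw [mem_Sset]
  refine ⟨fun x hx => ?_, mkS_card hf⟩
  rw [mem_mkS] at hx
  obtain ⟨i, hi1, hi2, rfl⟩ := hx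
  exact Finset.mem_Icc.mpr ⟨h1 i hi1 hi2, h2 i hi1 hi2⟩

lemma card_of_mem {n k : ℕ} {S : Finset ℕ} (hS : S ∈ Sset n k) : S.card = k :=
  (mem_Sset.mp hS).2

lemma mkS_congr {k : ℕ} {f g : ℕ → ℕ} (h : ∀ i, 1 ≤ i → i ≤ k → f i = g i) :
    mkS k f = mkS k g := by
  unfold mkS mkL
  congr 1
  apply List.map_congr_left
  intro i hi
  rw [List.mem_range'_1] at hi
  exact h i (by omega) (by omega)

-- S equals mkS of its own elt
lemma Sset_eq_mkS {n k : ℕ} {S : Finset ℕ} (hS : S ∈ Sset n k) :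
    S = mkS k (elt S) := by
  have hcard : (S.sort (· ≤ ·)).length = k := by
    rw [Finset.length_sort, card_of_mem hS]
  have : mkL k (elt S) = S.sort (· ≤ ·) := by
    apply List.ext_getElem
    · simp [mkL, hcard]
    · intro i hi hj
      simp only [mkL, List.getElem_map, List.getElem_range']
      rw [elt, List.getD_eq_getElem _ _ (by omega)]
      congr 1; omega
  rw [mkS, this]
  simp

lemma elt_lt_elt {n k : ℕ} {S : Finset ℕ} (hS : S ∈ Sset n k) {i j : ℕ}
    (h1 : 1 ≤ i) (hij : i < j) (hj : j ≤ k) : elt S i < elt S j := by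
  have hcard : (S.sort (· ≤ ·)).length = k := by
    rw [Finset.length_sort, card_of_mem hS]
  have hs := (Finset.sortedLT_sort S).pairwise
  rw [List.pairwise_iff_getElem] at hs
  rw [elt, elt, List.getD_eq_getElem _ _ (by omega), List.getD_eq_getElem _ _ (by omega)]
  exact hs _ _ _ _ (by omega)

lemma elt_mem {n k : ℕ} {S : Finset ℕ} (hS : S ∈ Sset n k) {r : ℕ}
    (h1 : 1 ≤ r) (h2 : r ≤ k) : elt S r ∈ S := by
  have hcard : (S.sort (· ≤ ·)).length = k := by
    rw [Finset.length_sort, card_of_mem hS]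
  rw [elt, List.getD_eq_getElem _ _ (by omega)]
  rw [← Finset.mem_sort (· ≤ ·)]
  exact List.getElem_mem _

lemma elt_one_le {n k : ℕ} {S : Finset ℕ} (hS : S ∈ Sset n k) {r : ℕ}
    (h1 : 1 ≤ r) (h2 : r ≤ k) : 1 ≤ elt S r :=
  (Finset.mem_Icc.mp ((mem_Sset.mp hS).1 (elt_mem hS h1 h2))).1

lemma elt_le_n {n k : ℕ} {S : Finset ℕ} (hS : S ∈ Sset n k) {r : ℕ}
    (h1 : 1 ≤ r) (h2 : r ≤ k) : elt S r ≤ n :=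
  (Finset.mem_Icc.mp ((mem_Sset.mp hS).1 (elt_mem hS h1 h2))).2

lemma le_elt_self {n k : ℕ} {S : Finset ℕ} (hS : S ∈ Sset n k) {r : ℕ}
    (h1 : 1 ≤ r) (h2 : r ≤ k) : r ≤ elt S r := by
  induction r with
  | zero => omega
  | succ m ih =>
    rcases Nat.eq_zero_or_pos m with hm | hm
    · subst hm; simpa using elt_one_le hS h1 h2
    · have h3 := ih hm (by omega)
      have h4 := elt_lt_elt hS hm (by omega : m < m + 1) h2
      show m + 1 ≤ elt S (m + 1)
      omega

lemma elt_surj {n k : ℕ} {S : Finset ℕ} (hS : S ∈ Sset n k) {x : ℕ} (hx : x ∈ S) :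
    ∃ r, 1 ≤ r ∧ r ≤ k ∧ elt S r = x := by
  rw [Sset_eq_mkS hS, mem_mkS] at hx
  exact hx

lemma Sset_ext {n k : ℕ} {S T : Finset ℕ} (hS : S ∈ Sset n k) (hT : T ∈ Sset n k)
    (h : ∀ r, 1 ≤ r → r ≤ k → elt S r = elt T r) : S = T := by
  rw [Sset_eq_mkS hS, Sset_eq_mkS hT]
  exact mkS_congr h


/-! ### extended element function -/

noncomputable def fe (n k : ℕ) (S : Finset ℕ) (i : ℕ) : ℕ :=
  if i = 0 then 0 else if i ≤ k then elt S i else n + 1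

lemma fe_eq_elt {n k : ℕ} {S : Finset ℕ} {i : ℕ} (h1 : 1 ≤ i) (h2 : i ≤ k) :
    fe n k S i = elt S i := by
  unfold fe; rw [if_neg (by omega), if_pos h2]

lemma fe_zero {n k : ℕ} {S : Finset ℕ} : fe n k S 0 = 0 := rfl

lemma fe_top {n k : ℕ} {S : Finset ℕ} : fe n k S (k + 1) = n + 1 := by
  unfold fe; rw [if_neg (by omega), if_neg (by omega)]

lemma fe_of_gt {n k : ℕ} {S : Finset ℕ} {j : ℕ} (h : k < j) : fe n k S j = n + 1 := by
  unfold fe; rw [if_neg (by omega), if_neg (by omega)]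

lemma fe_lt_fe {n k : ℕ} {S : Finset ℕ} (hS : S ∈ Sset n k) {i j : ℕ}
    (hij : i < j) (hj : j ≤ k + 1) : fe n k S i < fe n k S j := by
  by_cases hi : i = 0
  · subst hi
    rw [fe_zero]
    by_cases hjk : j ≤ k
    · rw [fe_eq_elt (by omega) hjk]
      exact lt_of_lt_of_le (by omega) (elt_one_le hS (by omega) hjk)
    · rw [fe_of_gt (by omega)]; omega
  · have hik : i ≤ k := by omega
    rw [fe_eq_elt (by omega) hik]
    by_cases hjk : j ≤ k
    · rw [fe_eq_elt (by omega) hjk]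
      exact elt_lt_elt hS (by omega) hij hjk
    · rw [fe_of_gt (by omega)]
      have := elt_le_n hS (by omega) hik
      omega

lemma fe_le_nsucc {n k : ℕ} {S : Finset ℕ} (hS : S ∈ Sset n k) {j : ℕ}
    (hj : j ≤ k + 1) : fe n k S j ≤ n + 1 := by
  unfold fe
  split_ifs with h1 h2
  · omega
  · have := elt_le_n hS (by omega) h2; omega
  · omega

lemma nxt_eq_fe {n k : ℕ} {S : Finset ℕ} (hS : S ∈ Sset n k) {r : ℕ}
    (h1 : 1 ≤ r) (h2 : r ≤ k) : nxt n S r = fe n k S (r + 1) := by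
  unfold nxt
  rw [card_of_mem hS]
  by_cases hr : r = k
  · rw [if_pos hr, hr, fe_top]
  · rw [if_neg hr, fe_eq_elt (by omega) (by omega)]

lemma prv_eq_fe {n k : ℕ} {S : Finset ℕ} (hS : S ∈ Sset n k) {r : ℕ}
    (h1 : 1 ≤ r) (h2 : r ≤ k) : prv S r = fe n k S (r - 1) := by
  unfold prv
  by_cases hr : r = 1
  · rw [if_pos hr, hr]; rfl
  · rw [if_neg hr, fe_eq_elt (by omega) (by omega)]

lemma mem_OutS {n k : ℕ} {S : Finset ℕ} (hS : S ∈ Sset n k) {i : ℕ} :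
    i ∈ OutS n k S ↔ (1 ≤ i ∧ i ≤ k) ∧ ¬ (elt S i % 2 = k % 2) ∧
      elt S i + 1 < fe n k S (i + 1) := by
  unfold OutS
  rw [Finset.mem_filter, Finset.mem_Icc]
  constructor
  · rintro ⟨⟨h1, h2⟩, h3, h4⟩
    exact ⟨⟨h1, h2⟩, h3, by rwa [nxt_eq_fe hS h1 h2] at h4⟩
  · rintro ⟨⟨h1, h2⟩, h3, h4⟩
    exact ⟨⟨h1, h2⟩, h3, by rwa [nxt_eq_fe hS h1 h2]⟩

lemma mem_InS {n k : ℕ} {S : Finset ℕ} (hS : S ∈ Sset n k) {i : ℕ} :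
    i ∈ InS k S ↔ (1 ≤ i ∧ i ≤ k) ∧ elt S i % 2 = k % 2 ∧
      fe n k S (i - 1) + 1 < elt S i := by
  unfold InS
  rw [Finset.mem_filter, Finset.mem_Icc]
  constructor
  · rintro ⟨⟨h1, h2⟩, h3, h4⟩
    exact ⟨⟨h1, h2⟩, h3, by rwa [prv_eq_fe hS h1 h2] at h4⟩
  · rintro ⟨⟨h1, h2⟩, h3, h4⟩
    exact ⟨⟨h1, h2⟩, h3, by rwa [prv_eq_fe hS h1 h2]⟩

lemma OutS_subset {n k : ℕ} {S : Finset ℕ} : OutS n k S ⊆ Finset.Icc 1 k :=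
  Finset.filter_subset _ _

lemma InS_subset {k : ℕ} {S : Finset ℕ} : InS k S ⊆ Finset.Icc 1 k :=
  Finset.filter_subset _ _

/-! ### the maps -/

noncomputable def chi (A : Finset ℕ) (i : ℕ) : ℕ := if i ∈ A then 1 else 0

noncomputable def Tm (n k : ℕ) (S : Finset ℕ) : Finset ℕ :=
  mkS k (fun i => elt S i + chi (OutS n k S) i)

noncomputable def Bm (n k : ℕ) (S : Finset ℕ) : Finset ℕ :=
  InS k (Tm n k S) \ OutS n k S

noncomputable def psiS (k : ℕ) (T B : Finset ℕ) : Finset ℕ :=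
  mkS k (fun i => elt T i - chi (InS k T \ B) i)

lemma chi_le_one {A : Finset ℕ} {i : ℕ} : chi A i ≤ 1 := by
  unfold chi; split_ifs <;> omega

lemma chi_of_mem {A : Finset ℕ} {i : ℕ} (h : i ∈ A) : chi A i = 1 := if_pos h
lemma chi_of_not_mem {A : Finset ℕ} {i : ℕ} (h : i ∉ A) : chi A i = 0 := if_neg h

section Tmap
variable {n k : ℕ} {S : Finset ℕ} (hS : S ∈ Sset n k)

-- the shifted function is strictly monotone and bounded
lemma Tm_mono (hS : S ∈ Sset n k) : ∀ i j, 1 ≤ i → i < j → j ≤ k →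
    elt S i + chi (OutS n k S) i < elt S j + chi (OutS n k S) j := by
  intro i j h1 hij hj
  by_cases hio : i ∈ OutS n k S
  · have hgap := ((mem_OutS hS).mp hio).2.2
    rw [chi_of_mem hio]
    have h2 : fe n k S (i + 1) ≤ fe n k S j := by
      rcases Nat.eq_or_lt_of_le (by omega : i + 1 ≤ j) with he | hl
      · rw [he]
      · exact le_of_lt (fe_lt_fe hS hl (by omega))
    rw [fe_eq_elt (by omega) hj] at h2
    omega
  · rw [chi_of_not_mem hio]
    have := elt_lt_elt hS h1 hij hj
    have : chi (OutS n k S) j ≤ 1 := chi_le_one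
    omega

lemma Tm_ub (hS : S ∈ Sset n k) : ∀ i, 1 ≤ i → i ≤ k →
    elt S i + chi (OutS n k S) i ≤ n := by
  intro i h1 h2
  by_cases hio : i ∈ OutS n k S
  · have hgap := ((mem_OutS hS).mp hio).2.2
    have := fe_le_nsucc hS (by omega : i + 1 ≤ k + 1)
    rw [chi_of_mem hio]
    omega
  · rw [chi_of_not_mem hio]
    have := elt_le_n hS h1 h2
    omega

lemma Tm_mem (hS : S ∈ Sset n k) : Tm n k S ∈ Sset n k :=
  mkS_mem_Sset (Tm_mono hS)
    (fun i h1 h2 => le_trans (elt_one_le hS h1 h2) (by omega)) (Tm_ub hS)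

lemma Tm_elt (hS : S ∈ Sset n k) {i : ℕ} (h1 : 1 ≤ i) (h2 : i ≤ k) :
    elt (Tm n k S) i = elt S i + chi (OutS n k S) i :=
  mkS_elt (Tm_mono hS) h1 h2

lemma Tm_fe (hS : S ∈ Sset n k) {j : ℕ} (hj : j ≤ k + 1) :
    fe n k (Tm n k S) j = fe n k S j + chi (OutS n k S) j := by
  by_cases hj0 : j = 0
  · subst hj0
    rw [fe_zero, fe_zero, chi_of_not_mem (fun h => by
      have := OutS_subset h; simp at this)]
  · by_cases hjk : j ≤ k
    · rw [fe_eq_elt (by omega) hjk, fe_eq_elt (by omega) hjk, Tm_elt hS (by omega) hjk]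
    · have hj1 : j = k + 1 := by omega
      subst hj1
      rw [fe_top, fe_top, chi_of_not_mem (fun h => by
        have := Finset.mem_Icc.mp (OutS_subset h); omega)]

end Tmap

lemma OutS_Tm {n k : ℕ} {S : Finset ℕ} (hS : S ∈ Sset n k) :
    OutS n k (Tm n k S) = ∅ := by
  have hT := Tm_mem hS
  apply Finset.eq_empty_of_forall_notMem
  intro i hi
  rw [mem_OutS hT] at hi
  obtain ⟨⟨h1, h2⟩, hpar, hgap⟩ := hi
  rw [Tm_elt hS h1 h2] at hpar hgap
  rw [Tm_fe hS (by omega : i + 1 ≤ k + 1)] at hgap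
  by_cases hio : i ∈ OutS n k S
  · rw [chi_of_mem hio] at hpar
    have := ((mem_OutS hS).mp hio).2.1
    omega
  · rw [chi_of_not_mem hio] at hpar hgap
    -- i not out, but parity is wrong, so no gap above: fe (i+1) = elt S i + 1
    have hno : ¬ (elt S i + 1 < fe n k S (i + 1)) := by
      intro hcon
      exact hio ((mem_OutS hS).mpr ⟨⟨h1, h2⟩, by omega, hcon⟩)
    have hmono : fe n k S i < fe n k S (i + 1) := fe_lt_fe hS (by omega) (by omega)
    rw [fe_eq_elt h1 h2] at hmono
    have heq : fe n k S (i + 1) = elt S i + 1 := by omega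
    -- then gap in Tm forces i+1 ∈ Out S, contradiction on parity
    have hchi : chi (OutS n k S) (i + 1) = 1 := by
      have := chi_le_one (A := OutS n k S) (i := i + 1)
      omega
    have hmem : i + 1 ∈ OutS n k S := by
      by_contra hc
      rw [chi_of_not_mem hc] at hchi
      omega
    have hpar2 := ((mem_OutS hS).mp hmem).2.1
    have hle : i + 1 ≤ k := ((mem_OutS hS).mp hmem).1.2
    rw [← fe_eq_elt (by omega) hle, heq] at hpar2
    omega

lemma OutS_subset_InS_Tm {n k : ℕ} {S : Finset ℕ} (hS : S ∈ Sset n k) :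
    OutS n k S ⊆ InS k (Tm n k S) := by
  intro i hio
  have hT := Tm_mem hS
  obtain ⟨⟨h1, h2⟩, hpar, hgap⟩ := (mem_OutS hS).mp hio
  rw [mem_InS hT]
  refine ⟨⟨h1, h2⟩, ?_, ?_⟩
  · rw [Tm_elt hS h1 h2, chi_of_mem hio]
    omega
  · rw [Tm_elt hS h1 h2, chi_of_mem hio, Tm_fe hS (by omega : i - 1 ≤ k + 1)]
    have hch : chi (OutS n k S) (i - 1) ≤ 1 := chi_le_one
    by_cases hprev : i - 1 ∈ OutS n k S
    · -- previous is Out: elt (i-1) + 1 < fe i = elt i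
      obtain ⟨⟨p1, p2⟩, _, pgap⟩ := (mem_OutS hS).mp hprev
      have : i - 1 + 1 = i := by omega
      rw [this, fe_eq_elt h1 h2] at pgap
      rw [chi_of_mem hprev, fe_eq_elt p1 p2]
      omega
    · rw [chi_of_not_mem hprev]
      have : fe n k S (i - 1) < fe n k S i := fe_lt_fe hS (by omega) (by omega)
      rw [fe_eq_elt h1 h2] at this
      omega

/-! ### the raising operation Sr -/

section SrSec
variable {n k : ℕ} {S : Finset ℕ} {r : ℕ}

lemma Sr_mono (hS : S ∈ Sset n k) (h1 : 1 ≤ r) (h2 : r ≤ k)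
    (hgap : elt S r + 1 < fe n k S (r + 1)) :
    ∀ i j, 1 ≤ i → i < j → j ≤ k →
      (elt S i + if i = r then 1 else 0) < (elt S j + if j = r then 1 else 0) := by
  intro i j hi hij hj
  by_cases hir : i = r
  · subst hir
    rw [if_pos rfl, if_neg (by omega)]
    have h3 : fe n k S (i + 1) ≤ fe n k S j := by
      rcases Nat.eq_or_lt_of_le (by omega : i + 1 ≤ j) with he | hl
      · rw [he]
      · exact le_of_lt (fe_lt_fe hS hl (by omega))
    rw [fe_eq_elt (by omega) hj] at h3
    omega
  · rw [if_neg hir]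
    have := elt_lt_elt hS hi hij hj
    split_ifs <;> omega

lemma Sr_ub (hS : S ∈ Sset n k) (h1 : 1 ≤ r) (h2 : r ≤ k)
    (hgap : elt S r + 1 < fe n k S (r + 1)) :
    ∀ i, 1 ≤ i → i ≤ k → (elt S i + if i = r then 1 else 0) ≤ n := by
  intro i hi hik
  by_cases hir : i = r
  · subst hir
    rw [if_pos rfl]
    have := fe_le_nsucc hS (by omega : i + 1 ≤ k + 1)
    omega
  · rw [if_neg hir]; exact elt_le_n hS hi hik

lemma elt_injOn (hS : S ∈ Sset n k) {i j : ℕ} (hi1 : 1 ≤ i) (hi2 : i ≤ k)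
    (hj1 : 1 ≤ j) (hj2 : j ≤ k) (h : elt S i = elt S j) : i = j := by
  rcases lt_trichotomy i j with hl | he | hl
  · have := elt_lt_elt hS hi1 hl hj2; omega
  · exact he
  · have := elt_lt_elt hS hj1 hl hi2; omega

lemma Sr_eq_mkS (hS : S ∈ Sset n k) (h1 : 1 ≤ r) (h2 : r ≤ k)
    (hgap : elt S r + 1 < fe n k S (r + 1)) :
    Sr S r = mkS k (fun i => elt S i + if i = r then 1 else 0) := by
  ext x
  rw [mem_mkS]
  unfold Sr
  simp only [Finset.mem_insert, Finset.mem_erase]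
  constructor
  · rintro (rfl | ⟨hne, hxS⟩)
    · exact ⟨r, h1, h2, by rw [if_pos rfl]⟩
    · obtain ⟨i, hi1, hi2, rfl⟩ := elt_surj hS hxS
      have hir : i ≠ r := fun he => hne (by rw [he])
      exact ⟨i, hi1, hi2, by rw [if_neg hir]; omega⟩
  · rintro ⟨i, hi1, hi2, rfl⟩
    by_cases hir : i = r
    · subst hir; rw [if_pos rfl]; left; rfl
    · rw [if_neg hir]
      right
      refine ⟨fun he => hir (elt_injOn hS hi1 hi2 h1 h2 he), elt_mem hS hi1 hi2⟩

lemma Sr_mem (hS : S ∈ Sset n k) (h1 : 1 ≤ r) (h2 : r ≤ k)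
    (hgap : elt S r + 1 < fe n k S (r + 1)) : Sr S r ∈ Sset n k := by
  rw [Sr_eq_mkS hS h1 h2 hgap]
  exact mkS_mem_Sset (Sr_mono hS h1 h2 hgap)
    (fun i a b => le_trans (elt_one_le hS a b) (by omega)) (Sr_ub hS h1 h2 hgap)

lemma Sr_elt (hS : S ∈ Sset n k) (h1 : 1 ≤ r) (h2 : r ≤ k)
    (hgap : elt S r + 1 < fe n k S (r + 1)) {i : ℕ} (hi1 : 1 ≤ i) (hi2 : i ≤ k) :
    elt (Sr S r) i = elt S i + if i = r then 1 else 0 := by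
  rw [Sr_eq_mkS hS h1 h2 hgap]
  exact mkS_elt (Sr_mono hS h1 h2 hgap) hi1 hi2

lemma Sr_fe (hS : S ∈ Sset n k) (h1 : 1 ≤ r) (h2 : r ≤ k)
    (hgap : elt S r + 1 < fe n k S (r + 1)) {j : ℕ} (hj : j ≤ k + 1) :
    fe n k (Sr S r) j = fe n k S j + if j = r then 1 else 0 := by
  by_cases hj0 : j = 0
  · subst hj0; rw [fe_zero, fe_zero, if_neg (by omega)]
  · by_cases hjk : j ≤ k
    · rw [fe_eq_elt (by omega) hjk, fe_eq_elt (by omega) hjk,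
        Sr_elt hS h1 h2 hgap (by omega) hjk]
    · have : j = k + 1 := by omega
      subst this
      rw [fe_top, fe_top, if_neg (by omega)]
end SrSec

section SrOut
variable {n k : ℕ} {S : Finset ℕ} {r : ℕ}

lemma OutS_Sr (hS : S ∈ Sset n k) (hr : r ∈ OutS n k S) :
    OutS n k (Sr S r) = (OutS n k S).erase r := by
  obtain ⟨⟨h1, h2⟩, hpar, hgap⟩ := (mem_OutS hS).mp hr
  have hmem := Sr_mem hS h1 h2 hgap
  ext i
  rw [mem_OutS hmem, Finset.mem_erase, mem_OutS hS]
  constructor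
  · rintro ⟨⟨i1, i2⟩, ipar, igap⟩
    rw [Sr_elt hS h1 h2 hgap i1 i2] at ipar igap
    rw [Sr_fe hS h1 h2 hgap (by omega : i + 1 ≤ k + 1)] at igap
    have hir : i ≠ r := by
      intro he; subst he
      rw [if_pos rfl] at ipar
      omega
    rw [if_neg hir] at ipar igap
    refine ⟨hir, ⟨i1, i2⟩, ipar, ?_⟩
    by_cases hi1r : i + 1 = r
    · -- fe (i+1) = elt S r; equality would contradict parity
      rw [if_pos hi1r] at igap
      rw [hi1r, fe_eq_elt h1 h2] at igap ⊢
      rcases Nat.lt_or_ge (elt S i + 1) (elt S r) with hl | hge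
      · exact hl
      · omega
    · rw [if_neg hi1r] at igap
      omega
  · rintro ⟨hir, ⟨i1, i2⟩, ipar, igap⟩
    rw [Sr_elt hS h1 h2 hgap i1 i2, if_neg hir,
      Sr_fe hS h1 h2 hgap (by omega : i + 1 ≤ k + 1)]
    refine ⟨⟨i1, i2⟩, ipar, ?_⟩
    split_ifs <;> omega

lemma Tm_Sr (hS : S ∈ Sset n k) (hr : r ∈ OutS n k S) :
    Tm n k (Sr S r) = Tm n k S := by
  obtain ⟨⟨h1, h2⟩, hpar, hgap⟩ := (mem_OutS hS).mp hr
  have hmem := Sr_mem hS h1 h2 hgap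
  apply Sset_ext (Tm_mem hmem) (Tm_mem hS)
  intro i i1 i2
  rw [Tm_elt hmem i1 i2, Tm_elt hS i1 i2, Sr_elt hS h1 h2 hgap i1 i2, OutS_Sr hS hr]
  unfold chi
  by_cases hir : i = r
  · subst hir
    rw [if_pos rfl, if_neg (Finset.notMem_erase _ _), if_pos hr]
  · rw [if_neg hir]
    by_cases hio : i ∈ OutS n k S
    · rw [if_pos hio, if_pos (Finset.mem_erase.mpr ⟨hir, hio⟩)]
    · rw [if_neg hio, if_neg (fun h => hio (Finset.mem_of_mem_erase h))]

lemma Bm_Sr (hS : S ∈ Sset n k) (hr : r ∈ OutS n k S) :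
    Bm n k (Sr S r) = insert r (Bm n k S) := by
  unfold Bm
  rw [Tm_Sr hS hr, OutS_Sr hS hr]
  have hrIn : r ∈ InS k (Tm n k S) := OutS_subset_InS_Tm hS hr
  ext x
  simp only [Finset.mem_sdiff, Finset.mem_insert, Finset.mem_erase]
  constructor
  · rintro ⟨hx, hne⟩
    by_cases hxr : x = r
    · exact Or.inl hxr
    · exact Or.inr ⟨hx, fun hxo => hne ⟨hxr, hxo⟩⟩
  · rintro (rfl | ⟨hx, hno⟩)
    · exact ⟨hrIn, fun h => h.1 rfl⟩
    · exact ⟨hx, fun h => hno h.2⟩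

lemma r_not_mem_Bm (hS : S ∈ Sset n k) (hr : r ∈ OutS n k S) : r ∉ Bm n k S := by
  unfold Bm
  rw [Finset.mem_sdiff]
  tauto
end SrOut

/-! ### the inverse map psi -/

section PsiSec
variable {n k : ℕ} {T B : Finset ℕ}

lemma psi_mono (hT : T ∈ Sset n k) :
    ∀ i j, 1 ≤ i → i < j → j ≤ k →
      elt T i - chi (InS k T \ B) i < elt T j - chi (InS k T \ B) j := by
  intro i j hi hij hj
  have hchij : chi (InS k T \ B) i ≤ 1 := chi_le_one
  have hmono := elt_lt_elt hT hi hij hj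
  by_cases hjA : j ∈ InS k T \ B
  · have hjIn : j ∈ InS k T := (Finset.mem_sdiff.mp hjA).1
    obtain ⟨⟨j1, j2⟩, _, jgap⟩ := (mem_InS hT).mp hjIn
    have hle : fe n k T i ≤ fe n k T (j - 1) := by
      rcases Nat.eq_or_lt_of_le (by omega : i ≤ j - 1) with he | hl
      · rw [he]
      · exact le_of_lt (fe_lt_fe hT hl (by omega))
    rw [fe_eq_elt hi (by omega)] at hle
    rw [chi_of_mem hjA]
    omega
  · rw [chi_of_not_mem hjA]
    omega

lemma psi_mem (hT : T ∈ Sset n k) : psiS k T B ∈ Sset n k := by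
  apply mkS_mem_Sset (psi_mono hT)
  · intro i h1 h2
    by_cases hiA : i ∈ InS k T \ B
    · have hiIn : i ∈ InS k T := (Finset.mem_sdiff.mp hiA).1
      obtain ⟨_, _, igap⟩ := (mem_InS hT).mp hiIn
      rw [chi_of_mem hiA]
      omega
    · rw [chi_of_not_mem hiA]
      have := elt_one_le hT h1 h2
      omega
  · intro i h1 h2
    have := elt_le_n hT h1 h2
    omega

lemma psi_elt (hT : T ∈ Sset n k) {i : ℕ} (h1 : 1 ≤ i) (h2 : i ≤ k) :
    elt (psiS k T B) i = elt T i - chi (InS k T \ B) i :=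
  mkS_elt (psi_mono hT) h1 h2

lemma psi_fe (hT : T ∈ Sset n k) {j : ℕ} (hj : j ≤ k + 1) :
    fe n k (psiS k T B) j = fe n k T j - chi (InS k T \ B) j := by
  by_cases hj0 : j = 0
  · subst hj0
    rw [fe_zero, fe_zero, chi_of_not_mem (fun h => by
      have := InS_subset (Finset.mem_sdiff.mp h).1; simp at this)]
  · by_cases hjk : j ≤ k
    · rw [fe_eq_elt (by omega) hjk, fe_eq_elt (by omega) hjk, psi_elt hT (by omega) hjk]
    · have : j = k + 1 := by omega
      subst this
      rw [fe_top, fe_top, chi_of_not_mem (fun h => by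
        have := Finset.mem_Icc.mp (InS_subset (Finset.mem_sdiff.mp h).1); omega)]
      omega

lemma OutS_psi (hT : T ∈ Sset n k) (hout : OutS n k T = ∅) :
    OutS n k (psiS k T B) = InS k T \ B := by
  have hP := psi_mem (B := B) hT
  ext i
  rw [mem_OutS hP]
  constructor
  · rintro ⟨⟨i1, i2⟩, ipar, igap⟩
    rw [psi_elt hT i1 i2] at ipar igap
    rw [psi_fe hT (by omega : i + 1 ≤ k + 1)] at igap
    by_contra hiA
    rw [chi_of_not_mem hiA] at ipar igap
    -- i not lowered, wrong parity, so since Out(T) empty: no gap above in T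
    have hno : i ∉ OutS n k T := by rw [hout]; exact Finset.notMem_empty i
    rw [mem_OutS hT] at hno
    push_neg at hno
    have hfe := hno ⟨i1, i2⟩ (by omega)
    have hch : chi (InS k T \ B) (i + 1) ≤ 1 := chi_le_one
    omega
  · intro hiA
    have hiIn : i ∈ InS k T := (Finset.mem_sdiff.mp hiA).1
    obtain ⟨⟨i1, i2⟩, ipar, igap⟩ := (mem_InS hT).mp hiIn
    rw [psi_elt hT i1 i2, chi_of_mem hiA, psi_fe hT (by omega : i + 1 ≤ k + 1)]
    refine ⟨⟨i1, i2⟩, by omega, ?_⟩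
    by_cases hjA : i + 1 ∈ InS k T \ B
    · have hjIn : i + 1 ∈ InS k T := (Finset.mem_sdiff.mp hjA).1
      obtain ⟨⟨j1, j2⟩, _, jgap⟩ := (mem_InS hT).mp hjIn
      have : i + 1 - 1 = i := by omega
      rw [this, fe_eq_elt i1 i2] at jgap
      rw [chi_of_mem hjA, fe_eq_elt j1 j2]
      omega
    · rw [chi_of_not_mem hjA]
      have := fe_lt_fe hT (by omega : i < i + 1) (by omega : i + 1 ≤ k + 1)
      rw [fe_eq_elt i1 i2] at this
      omega

lemma Tm_psi (hT : T ∈ Sset n k) (hout : OutS n k T = ∅) :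
    Tm n k (psiS k T B) = T := by
  have hP := psi_mem (B := B) hT
  apply Sset_ext (Tm_mem hP) hT
  intro i i1 i2
  rw [Tm_elt hP i1 i2, OutS_psi hT hout, psi_elt hT i1 i2]
  by_cases hiA : i ∈ InS k T \ B
  · have hiIn : i ∈ InS k T := (Finset.mem_sdiff.mp hiA).1
    obtain ⟨_, _, igap⟩ := (mem_InS hT).mp hiIn
    rw [chi_of_mem hiA]
    omega
  · rw [chi_of_not_mem hiA]
    omega

lemma Bm_psi (hT : T ∈ Sset n k) (hout : OutS n k T = ∅) (hB : B ⊆ InS k T) :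
    Bm n k (psiS k T B) = B := by
  unfold Bm
  rw [Tm_psi hT hout, OutS_psi hT hout]
  ext x
  simp only [Finset.mem_sdiff]
  constructor
  · rintro ⟨hx, hno⟩
    by_contra hxB
    exact hno ⟨hx, hxB⟩
  · intro hxB
    exact ⟨hB hxB, fun h => h.2 hxB⟩

lemma psi_Tm_Bm {S : Finset ℕ} (hS : S ∈ Sset n k) :
    psiS k (Tm n k S) (Bm n k S) = S := by
  have hO : InS k (Tm n k S) \ Bm n k S = OutS n k S := by
    unfold Bm
    ext x
    simp only [Finset.mem_sdiff, not_and, not_not]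
    constructor
    · rintro ⟨hx, h⟩
      by_contra hxO
      exact hxO (h hx)
    · intro hxO
      exact ⟨OutS_subset_InS_Tm hS hxO, fun _ => hxO⟩
  apply Sset_ext (psi_mem (Tm_mem hS)) hS
  intro i i1 i2
  rw [psi_elt (Tm_mem hS) i1 i2, hO, Tm_elt hS i1 i2]
  omega
end PsiSec

/-! ### degrees and signs -/

noncomputable def gsgn (n k : ℕ) (S : Finset ℕ) : ℕ :=
  (∑ r ∈ OutS n k S, (dr S r + ((Bm n k S).filter (· < r)).card)) +
    Nat.choose (OutS n k S).card 2

noncomputable def eps (n k : ℕ) (S : Finset ℕ) : ℤ := (-1) ^ (gsgn n k S)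

lemma dr_eq {n k : ℕ} {S : Finset ℕ} (hS : S ∈ Sset n k) (r : ℕ) :
    dr S r = ∑ i ∈ Finset.Icc r k, (elt S i - i) := by
  rw [dr, card_of_mem hS]

lemma sum_chi {k : ℕ} {O : Finset ℕ} (hO : O ⊆ Finset.Icc 1 k) :
    ∑ i ∈ Finset.Icc 1 k, chi O i = O.card := by
  unfold chi
  rw [Finset.sum_ite_mem]
  rw [Finset.inter_eq_right.mpr hO]
  simp

lemma dS_Tm {n k : ℕ} {S : Finset ℕ} (hS : S ∈ Sset n k) :
    dS (Tm n k S) = dS S + (OutS n k S).card := by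
  unfold dS
  rw [dr_eq (Tm_mem hS), dr_eq hS]
  have h : ∀ i ∈ Finset.Icc 1 k,
      elt (Tm n k S) i - i = (elt S i - i) + chi (OutS n k S) i := by
    intro i hi
    rw [Finset.mem_Icc] at hi
    rw [Tm_elt hS hi.1 hi.2]
    have := le_elt_self hS hi.1 hi.2
    omega
  rw [Finset.sum_congr rfl h, Finset.sum_add_distrib, sum_chi OutS_subset]

lemma dr_Sr {n k : ℕ} {S : Finset ℕ} {r : ℕ} (hS : S ∈ Sset n k)
    (h1 : 1 ≤ r) (h2 : r ≤ k) (hgap : elt S r + 1 < fe n k S (r + 1))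
    {r' : ℕ} (hr' : 1 ≤ r') :
    dr (Sr S r) r' = dr S r' + if r' ≤ r then 1 else 0 := by
  rw [dr_eq (Sr_mem hS h1 h2 hgap), dr_eq hS]
  have h : ∀ i ∈ Finset.Icc r' k,
      elt (Sr S r) i - i = (elt S i - i) + if i = r then 1 else 0 := by
    intro i hi
    rw [Finset.mem_Icc] at hi
    rw [Sr_elt hS h1 h2 hgap (by omega) hi.2]
    have := le_elt_self hS (by omega : 1 ≤ i) hi.2
    split_ifs <;> omega
  rw [Finset.sum_congr rfl h, Finset.sum_add_distrib]
  congr 1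
  simp only [Finset.sum_ite_eq', Finset.mem_Icc]
  split_ifs <;> omega

lemma filter_insert_card {B : Finset ℕ} {r r' : ℕ} (hr : r ∉ B) :
    ((insert r B).filter (· < r')).card
      = (B.filter (· < r')).card + if r < r' then 1 else 0 := by
  rw [Finset.filter_insert]
  split_ifs with h
  · rw [Finset.card_insert_of_notMem (fun hc => hr (Finset.mem_of_mem_filter _ hc))]
  · rfl

lemma gsgn_Sr {n k : ℕ} {S : Finset ℕ} {r : ℕ} (hS : S ∈ Sset n k)
    (hr : r ∈ OutS n k S) :
    gsgn n k (Sr S r) + (dr S r + ((Bm n k S).filter (· < r)).card) = gsgn n k S := by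
  obtain ⟨⟨h1, h2⟩, hpar, hgap⟩ := (mem_OutS hS).mp hr
  set O := OutS n k S with hO
  set Bs := Bm n k S with hBs
  have hrB : r ∉ Bs := r_not_mem_Bm hS hr
  have hm : 1 ≤ O.card := Finset.card_pos.mpr ⟨r, hr⟩
  unfold gsgn
  rw [OutS_Sr hS hr, Bm_Sr hS hr, Finset.card_erase_of_mem hr]
  rw [← hO, ← hBs]
  have hsum : ∑ r' ∈ O.erase r,
      (dr (Sr S r) r' + (((insert r Bs)).filter (· < r')).card)
      = ∑ r' ∈ O.erase r, ((dr S r' + (Bs.filter (· < r')).card) + 1) := by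
    apply Finset.sum_congr rfl
    intro r' hr'
    have hne : r' ≠ r := (Finset.mem_erase.mp hr').1
    have hr'O : r' ∈ O := (Finset.mem_erase.mp hr').2
    have hr'1 : 1 ≤ r' := (Finset.mem_Icc.mp (OutS_subset hr'O)).1
    rw [dr_Sr hS h1 h2 hgap hr'1, filter_insert_card hrB]
    split_ifs <;> omega
  rw [hsum, Finset.sum_add_distrib]
  have hchoose : Nat.choose O.card 2 = Nat.choose (O.card - 1) 2 + (O.card - 1) := by
    obtain ⟨m, hm'⟩ : ∃ m, O.card = m + 1 := ⟨O.card - 1, by omega⟩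
    rw [hm']
    simp [Nat.choose_succ_succ]
    omega
  have hsplit : ∑ r' ∈ O, (dr S r' + (Bs.filter (· < r')).card)
      = (dr S r + (Bs.filter (· < r)).card)
        + ∑ r' ∈ O.erase r, (dr S r' + (Bs.filter (· < r')).card) :=
    (Finset.add_sum_erase O _ hr).symm
  simp only [Finset.sum_const, smul_eq_mul, mul_one, Finset.card_erase_of_mem hr]
  omega

lemma eps_mul_self {n k : ℕ} (S : Finset ℕ) : eps n k S * eps n k S = 1 := by
  unfold eps
  rw [← pow_add]
  exact Even.neg_one_pow ⟨_, rfl⟩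

lemma eps_Sr {n k : ℕ} {S : Finset ℕ} {r : ℕ} (hS : S ∈ Sset n k)
    (hr : r ∈ OutS n k S) :
    eps n k S = eps n k (Sr S r) * (-1) ^ (dr S r)
      * (-1) ^ ((Bm n k S).filter (· < r)).card := by
  unfold eps
  rw [← pow_add, ← pow_add]
  congr 1
  have := gsgn_Sr hS hr
  omega

/-! ### cubesIdx membership and the bijection -/

lemma InS_Tm_sdiff_Bm {n k : ℕ} {S : Finset ℕ} (hS : S ∈ Sset n k) :
    InS k (Tm n k S) \ Bm n k S = OutS n k S := by
  unfold Bm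
  ext x
  simp only [Finset.mem_sdiff, not_and, not_not]
  constructor
  · rintro ⟨hx, h⟩
    by_contra hxO
    exact hxO (h hx)
  · intro hxO
    exact ⟨OutS_subset_InS_Tm hS hxO, fun _ => hxO⟩

lemma mem_cubesIdx {n k : ℕ} {p : Finset ℕ × Finset ℕ} :
    p ∈ cubesIdx n k ↔ p.1 ∈ Sset n k ∧ OutS n k p.1 = ∅ ∧ p.2 ⊆ InS k p.1 := by
  unfold cubesIdx
  rw [Finset.mem_filter, Finset.mem_product, Finset.mem_filter, Finset.mem_powerset]
  constructor
  · rintro ⟨⟨⟨hS, hO⟩, _⟩, hB⟩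
    exact ⟨hS, hO, hB⟩
  · rintro ⟨hS, hO, hB⟩
    exact ⟨⟨⟨hS, hO⟩, hB.trans InS_subset⟩, hB⟩

lemma phi_mem {n k : ℕ} {S : Finset ℕ} (hS : S ∈ Sset n k) :
    (Tm n k S, Bm n k S) ∈ cubesIdx n k :=
  mem_cubesIdx.mpr ⟨Tm_mem hS, OutS_Tm hS, Finset.sdiff_subset⟩

noncomputable def phiE (n k : ℕ) : {S // S ∈ Sset n k} ≃ {p // p ∈ cubesIdx n k} where
  toFun S := ⟨(Tm n k S.1, Bm n k S.1), phi_mem S.2⟩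
  invFun p := ⟨psiS k p.1.1 p.1.2, psi_mem (mem_cubesIdx.mp p.2).1⟩
  left_inv S := Subtype.ext (psi_Tm_Bm S.2)
  right_inv p := by
    obtain ⟨hS, hO, hB⟩ := mem_cubesIdx.mp p.2
    exact Subtype.ext (Prod.ext (Tm_psi hS hO) (Bm_psi hS hO hB))

lemma odd_sub_iff (k s : ℕ) : Odd ((k : ℤ) - s) ↔ ¬ (s % 2 = k % 2) := by
  rw [Int.odd_sub, Int.odd_coe_nat, Int.even_coe_nat, Nat.odd_iff, Nat.even_iff]
  omega

lemma cond_iff {n k : ℕ} {S T : Finset ℕ} (hS : S ∈ Sset n k) {r : ℕ}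
    (h1 : 1 ≤ r) (h2 : r ≤ k) :
    (1 < nxt n S r - elt S r ∧ Odd ((k : ℤ) - elt S r) ∧ T = Sr S r)
      ↔ (r ∈ OutS n k S ∧ T = Sr S r) := by
  rw [odd_sub_iff, mem_OutS hS, nxt_eq_fe hS h1 h2]
  constructor
  · rintro ⟨a, b, c⟩
    exact ⟨⟨⟨h1, h2⟩, b, by omega⟩, c⟩
  · rintro ⟨⟨_, b, c⟩, d⟩
    exact ⟨by omega, b, d⟩

lemma main_entry {n k : ℕ} {S T : Finset ℕ} (hS : S ∈ Sset n k) (hT : T ∈ Sset n k) :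
    eps n k T * schubCoeff n k ℤ T S
      = (if Tm n k T = Tm n k S
          then cubeUp (InS k (Tm n k S)) (Bm n k T) (Bm n k S) else 0) * eps n k S := by
  by_cases hex : ∃ r, r ∈ OutS n k S ∧ T = Sr S r
  · obtain ⟨r, hrO, hTeq⟩ := hex
    obtain ⟨⟨h1, h2⟩, hpar, hgap⟩ := (mem_OutS hS).mp hrO
    -- evaluate the Schubert coefficient
    have hcoeff : schubCoeff n k ℤ T S = (-1) ^ (dr S r) * 2 := by
      unfold schubCoeff
      rw [Finset.sum_eq_single_of_mem r (Finset.mem_Icc.mpr ⟨h1, h2⟩)]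
      · rw [if_pos ((cond_iff hS h1 h2).mpr ⟨hrO, hTeq⟩)]
      · intro b hb hbne
        rw [Finset.mem_Icc] at hb
        rw [if_neg]
        intro hc
        obtain ⟨hbO, hTb⟩ := (cond_iff hS hb.1 hb.2).mp hc
        obtain ⟨_, _, hbgap⟩ := (mem_OutS hS).mp hbO
        have e1 : elt T r = elt S r + 1 := by
          rw [hTeq, Sr_elt hS h1 h2 hgap h1 h2, if_pos rfl]
        have e2 : elt T r = elt S r := by
          rw [hTb, Sr_elt hS hb.1 hb.2 hbgap h1 h2, if_neg (fun h => hbne h.symm)]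
          omega
        omega
    -- evaluate the cube coefficient
    have hTm : Tm n k T = Tm n k S := by rw [hTeq]; exact Tm_Sr hS hrO
    have hBm : Bm n k T = insert r (Bm n k S) := by rw [hTeq]; exact Bm_Sr hS hrO
    have hrB : r ∉ Bm n k S := r_not_mem_Bm hS hrO
    have hcube : cubeUp (InS k (Tm n k S)) (Bm n k T) (Bm n k S)
        = (-1) ^ ((Bm n k S).filter (· < r)).card * 2 := by
      unfold cubeUp
      rw [Finset.sum_eq_single_of_mem r (OutS_subset_InS_Tm hS hrO)]
      · rw [if_pos ⟨hrB, hBm⟩]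
      · intro b hb hbne
        rw [if_neg]
        rintro ⟨hbB, hBb⟩
        rw [hBm] at hBb
        have : r ∈ insert b (Bm n k S) := by rw [← hBb]; exact Finset.mem_insert_self _ _
        rcases Finset.mem_insert.mp this with he | hmem
        · exact hbne he.symm
        · exact hrB hmem
    rw [hcoeff, if_pos hTm, hcube, eps_Sr hS hrO, ← hTeq]
    have hb : (-1 : ℤ) ^ ((Bm n k S).filter (· < r)).card
        * (-1) ^ ((Bm n k S).filter (· < r)).card = 1 := by
      rw [← pow_add]; exact Even.neg_one_pow ⟨_, rfl⟩
    linear_combination (-(eps n k T * (-1 : ℤ) ^ (dr S r) * 2)) * hb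
  · -- no raising move: both sides vanish
    have hcoeff : schubCoeff n k ℤ T S = 0 := by
      unfold schubCoeff
      apply Finset.sum_eq_zero
      intro r hr
      rw [Finset.mem_Icc] at hr
      rw [if_neg]
      intro hc
      exact hex ⟨r, (cond_iff hS hr.1 hr.2).mp hc⟩
    rw [hcoeff, mul_zero]
    by_cases hTm : Tm n k T = Tm n k S
    · rw [if_pos hTm]
      have hcube : cubeUp (InS k (Tm n k S)) (Bm n k T) (Bm n k S) = 0 := by
        unfold cubeUp
        apply Finset.sum_eq_zero
        intro i hi
        rw [if_neg]
        rintro ⟨hiB, hBi⟩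
        have hiO : i ∈ OutS n k S := by
          rw [← InS_Tm_sdiff_Bm hS]
          exact Finset.mem_sdiff.mpr ⟨hi, hiB⟩
        obtain ⟨⟨i1, i2⟩, _, higap⟩ := (mem_OutS hS).mp hiO
        have hTm' : Tm n k (Sr S i) = Tm n k T := by rw [Tm_Sr hS hiO, hTm]
        have hBm' : Bm n k (Sr S i) = Bm n k T := by rw [Bm_Sr hS hiO, hBi]
        have : T = Sr S i := by
          rw [← psi_Tm_Bm hT, ← psi_Tm_Bm (Sr_mem hS i1 i2 higap), hTm', hBm']
        exact hex ⟨i, hiO, this⟩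
      rw [hcube, zero_mul]
    · rw [if_neg hTm, zero_mul]

lemma deg_phi {n k : ℕ} {S : Finset ℕ} (hS : S ∈ Sset n k) :
    (dS (Tm n k S) : ℤ) - ((InS k (Tm n k S)).card : ℤ) + ((Bm n k S).card : ℤ)
      = (dS S : ℤ) := by
  have h1 := dS_Tm hS
  have h2 : (Bm n k S).card = (InS k (Tm n k S)).card - (OutS n k S).card :=
    Finset.card_sdiff_of_subset (OutS_subset_InS_Tm hS)
  have h3 : (OutS n k S).card ≤ (InS k (Tm n k S)).card :=
    Finset.card_le_card (OutS_subset_InS_Tm hS)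
  push_cast [h1, h2]
  omega

theorem stmt3' (n k : ℕ) (hk : k ≤ n) :
    CxIso ℤ (schubD n k ℤ) (fun S => (dS S.1 : ℤ))
      (cubesD n k)
      (fun p => (dS p.1.1 : ℤ) - ((InS k p.1.1).card : ℤ) + (p.1.2.card : ℤ)) := by
  classical
  set φ := phiE n k with hφ
  -- the degree of φ S equals the degree of S
  have hdeg : ∀ S : {S // S ∈ Sset n k},
      (dS (φ S).1.1 : ℤ) - ((InS k (φ S).1.1).card : ℤ) + (((φ S).1.2).card : ℤ)
        = (dS S.1 : ℤ) := fun S => deg_phi S.2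
  refine ⟨{
      toFun := fun v q => eps n k (φ.symm q).1 * v (φ.symm q)
      map_add' := by intro v w; funext q; simp; ring
      map_smul' := by intro c v; funext q; simp; ring
      invFun := fun w i => eps n k i.1 * w (φ i)
      left_inv := by
        intro v; funext i
        simp only [Equiv.symm_apply_apply]
        rw [← mul_assoc, eps_mul_self, one_mul]
      right_inv := by
        intro w; funext q
        simp only [Equiv.apply_symm_apply]
        rw [← mul_assoc, eps_mul_self, one_mul] }, ?_, ?_, ?_⟩
  · -- commutes with differentials
    intro v
    funext q
    simp only [LinearEquiv.coe_mk, LinearMap.coe_mk, AddHom.coe_mk, Matrix.mulVec, dotProduct]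
    rw [Finset.mul_sum]
    rw [← Equiv.sum_comp φ (fun p => cubesD n k q p * (eps n k (φ.symm p).1 * v (φ.symm p)))]
    apply Finset.sum_congr rfl
    intro S _
    simp only [Equiv.symm_apply_apply]
    have hmain := main_entry S.2 (φ.symm q).2
    have hcd : cubesD n k q (φ S)
        = (if Tm n k (φ.symm q).1 = Tm n k S.1
            then cubeUp (InS k (Tm n k S.1)) (Bm n k (φ.symm q).1) (Bm n k S.1) else 0) := by
      conv_lhs => rw [← φ.apply_symm_apply q]
      rfl
    rw [hcd]
    have hsd : schubD n k ℤ (φ.symm q) S = schubCoeff n k ℤ (φ.symm q).1 S.1 := rfl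
    rw [hsd]
    linear_combination (v S) * hmain
  · intro m v hv q hq
    simp only [LinearEquiv.coe_mk, LinearMap.coe_mk, AddHom.coe_mk]
    have : (dS (φ.symm q).1 : ℤ) ≠ m := by
      have h := hdeg (φ.symm q)
      rw [φ.apply_symm_apply] at h
      rw [← h]
      exact hq
    rw [hv _ this, mul_zero]
  · intro m w hw i hi
    show eps n k i.1 * w (φ i) = 0
    have : (dS (φ i).1.1 : ℤ) - ((InS k (φ i).1.1).card : ℤ) + (((φ i).1.2).card : ℤ) ≠ m := by
      rw [hdeg i]
      exact hi
    rw [hw _ this, mul_zero]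

/-- the Schubert cochain complex over `ℤ` is isomorphic to
`⊕_{S ∈ {n;k}, Out(S) = ∅} D^{⊗ card In(S)}`, with the summand indexed by `S` occupying
cohomological degrees `d(S) − card In(S)` through `d(S)`. -/
theorem stmt3 (n k : ℕ) (hk : k ≤ n) :
    CxIso ℤ (schubD n k ℤ) (fun S => (dS S.1 : ℤ))
      (cubesD n k)
      (fun p => (dS p.1.1 : ℤ) - ((InS k p.1.1).card : ℤ) + (p.1.2.card : ℤ)) := by
  exact stmt3' n k hk
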